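/- Let 0 < P_fa < P_d < 1, α ∈ (0,1], p ∈ (0,1], and β'_{1,0}, β'_{0,1} ≥ 0 with β'_{1,0} + α p < 1/2 and β'_{0,1} + α p < 1/2. For ε ∈ [0,p] set β_{1,0}(ε) = β'_{1,0} + α(p−ε), β_{0,1} = β'_{0,1} + α p, π_{1,1}(ε) = β_{1,0}(ε)(1−P_d) + (1−β_{0,1})P_d and π_{1,0}(ε) = β_{1,0}(ε)(1−P_fa) + (1−β_{0,1})P_fa. Then the Bernoulli Kullback–Leibler divergence D_k(ε) = π_{1,0}(ε) log(π_{1,0}(ε)/π_{1,1}(ε)) + (1−π_{1,0}(ε)) log((1−π_{1,0}(ε))/(1−π_{1,1}(ε))) is strictly increasing in ε on [0,p]. That is, deviating from symmetric flipping probabilities (P_{1,0}, P_{0,1}) = (p,p) to (p−ε, p) with ε > 0 strictly increases D_k. -/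

import Mathlib

/-- Probability of receiving a 1, given aggregate flipping probabilities
`β₁₀`, `β₀₁` and local decision probability `P`. -/
noncomputable def piProb (β10 β01 P : ℝ) : ℝ := β10 * (1 - P) + (1 - β01) * P

/-- Bernoulli Kullback–Leibler divergence between success probabilities `a` and `b`. -/
noncomputable def klBern (a b : ℝ) : ℝ :=
  a * Real.log (a / b) + (1 - a) * Real.log ((1 - a) / (1 - b))

lemma key_ineq (Pfa Pd t c a b : ℝ)
    (hPfa : 0 < Pfa) (hPfaPd : Pfa < Pd) (hPd : Pd < 1)
    (ht : 0 ≤ t) (hc : 0 ≤ c) (htc : t + c < 1)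
    (ha_def : a = t * (1 - Pfa) + (1 - c) * Pfa)
    (hb_def : b = t * (1 - Pd) + (1 - c) * Pd) :
    (1 - Pfa) * (Real.log (a / b) - Real.log ((1 - a) / (1 - b)))
      + (1 - Pd) * ((1 - a) / (1 - b) - a / b) < 0 := by
  have ha : 0 < a := by nlinarith
  have hb : 0 < b := by nlinarith
  have ha1 : a < 1 := by nlinarith
  have hb1 : b < 1 := by nlinarith
  have hab : a < b := by nlinarith
  have hane : a ≠ 0 := ne_of_gt ha
  have hbne : b ≠ 0 := ne_of_gt hb
  have hane1 : (1:ℝ) - a ≠ 0 := by linarith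
  have hbne1 : (1:ℝ) - b ≠ 0 := by linarith
  have h1 : Real.log (a / b) ≤ a / b - 1 :=
    Real.log_le_sub_one_of_pos (div_pos ha hb)
  have h2 : Real.log ((1 - b) / (1 - a)) ≤ (1 - b) / (1 - a) - 1 :=
    Real.log_le_sub_one_of_pos (div_pos (by linarith) (by linarith))
  have hlog : Real.log ((1 - a) / (1 - b)) = - Real.log ((1 - b) / (1 - a)) := by
    rw [Real.log_div hane1 hbne1, Real.log_div hbne1 hane1]
    ring
  have hstep : Real.log (a / b) - Real.log ((1 - a) / (1 - b))
      ≤ (a / b - 1) + ((1 - b) / (1 - a) - 1) := by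
    rw [hlog]; linarith
  -- key polynomial inequality
  have hpoly : (1 - Pd) * (1 - a) < (1 - Pfa) * (1 - b) * ((1 - a) + b) := by
    have hkey : (1 - Pfa) * (1 - b) - (1 - Pd) * (1 - a) = c * (Pd - Pfa) := by
      rw [ha_def, hb_def]; ring
    nlinarith [mul_pos (mul_pos (by linarith : (0:ℝ) < 1 - Pfa) (by linarith : (0:ℝ) < 1 - b)) (by linarith : (0:ℝ) < b - a)]
  have hE' : (1 - Pfa) * ((a / b - 1) + ((1 - b) / (1 - a) - 1))
      + (1 - Pd) * ((1 - a) / (1 - b) - a / b) < 0 := by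
    have heq : (1 - Pfa) * ((a / b - 1) + ((1 - b) / (1 - a) - 1))
        + (1 - Pd) * ((1 - a) / (1 - b) - a / b)
        = ((b - a) * ((1 - Pd) * (1 - a) - (1 - Pfa) * (1 - b) * ((1 - a) + b)))
          / (b * (1 - b) * (1 - a)) := by
      field_simp
      ring
    rw [heq]
    apply div_neg_of_neg_of_pos
    · nlinarith
    · exact mul_pos (mul_pos hb (by linarith)) (by linarith)
  nlinarith [mul_le_mul_of_nonneg_left hstep (by linarith : (0:ℝ) ≤ 1 - Pfa)]

set_option maxHeartbeats 1000000 in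
theorem stmt_5 (Pfa Pd α p β10' β01' : ℝ)
    (hPfa : 0 < Pfa) (hPfaPd : Pfa < Pd) (hPd : Pd < 1)
    (hα : α ∈ Set.Ioc (0 : ℝ) 1) (hp : p ∈ Set.Ioc (0 : ℝ) 1)
    (hβ10' : 0 ≤ β10') (hβ01' : 0 ≤ β01')
    (h10 : β10' + α * p < 1 / 2) (h01 : β01' + α * p < 1 / 2) :
    StrictMonoOn
      (fun ε : ℝ =>
        klBern (piProb (β10' + α * (p - ε)) (β01' + α * p) Pfa)
               (piProb (β10' + α * (p - ε)) (β01' + α * p) Pd))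
      (Set.Icc 0 p) := by
  obtain ⟨hα0, hα1⟩ := hα
  obtain ⟨hp0, hp1⟩ := hp
  set c : ℝ := β01' + α * p with hc_def
  have hc0 : 0 ≤ c := by positivity
  have hc1 : c < 1 / 2 := h01
  -- abbreviations
  set a : ℝ → ℝ := fun ε => (β10' + α * (p - ε)) * (1 - Pfa) + (1 - c) * Pfa with ha_def
  set b : ℝ → ℝ := fun ε => (β10' + α * (p - ε)) * (1 - Pd) + (1 - c) * Pd with hb_def
  have hfacts : ∀ x ∈ Set.Icc (0:ℝ) p,
      0 < a x ∧ a x < 1 ∧ 0 < b x ∧ b x < 1 ∧ a x < b x := by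
    intro x hx
    obtain ⟨hx0, hxp⟩ := hx
    have ht0 : 0 ≤ β10' + α * (p - x) := by nlinarith
    have ht1 : β10' + α * (p - x) + c < 1 := by nlinarith
    simp only [ha_def, hb_def]
    refine ⟨by nlinarith, by nlinarith, by nlinarith, by nlinarith, by nlinarith⟩
  -- derivative expression
  set D : ℝ → ℝ := fun x => -(α * ((1 - Pfa) * (Real.log (a x / b x)
      - Real.log ((1 - a x) / (1 - b x)))
      + (1 - Pd) * ((1 - a x) / (1 - b x) - a x / b x))) with hD_def
  have hasD : ∀ x ∈ Set.Icc (0:ℝ) p,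
      HasDerivAt (fun ε : ℝ =>
        klBern (piProb (β10' + α * (p - ε)) (β01' + α * p) Pfa)
               (piProb (β10' + α * (p - ε)) (β01' + α * p) Pd)) (D x) x := by
    intro x hx
    obtain ⟨ha0, ha1, hb0, hb1, hab⟩ := hfacts x hx
    have hA : HasDerivAt (fun ε : ℝ => β10' + α * (p - ε)) (-α) x := by
      have := (((hasDerivAt_id x).const_sub p).const_mul α).const_add β10'
      simpa using this
    have hha : HasDerivAt a (-α * (1 - Pfa)) x := by
      simpa [ha_def] using (hA.mul_const (1 - Pfa)).add_const ((1 - c) * Pfa)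
    have hhb : HasDerivAt b (-α * (1 - Pd)) x := by
      simpa [hb_def] using (hA.mul_const (1 - Pd)).add_const ((1 - c) * Pd)
    have hha' : HasDerivAt (fun ε => 1 - a ε) (-(-α * (1 - Pfa))) x := hha.const_sub 1
    have hhb' : HasDerivAt (fun ε => 1 - b ε) (-(-α * (1 - Pd))) x := hhb.const_sub 1
    have hdiv1 : HasDerivAt (fun ε => a ε / b ε)
        ((-α * (1 - Pfa) * b x - a x * (-α * (1 - Pd))) / (b x)^2) x :=
      hha.div hhb (ne_of_gt hb0)
    have hdiv2 : HasDerivAt (fun ε => (1 - a ε) / (1 - b ε))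
        ((-(-α * (1 - Pfa)) * (1 - b x) - (1 - a x) * (-(-α * (1 - Pd)))) / (1 - b x)^2) x :=
      hha'.div hhb' (ne_of_gt (by linarith : (0:ℝ) < 1 - b x))
    have hlog1 : HasDerivAt (fun ε => Real.log (a ε / b ε))
        ((((-α * (1 - Pfa) * b x - a x * (-α * (1 - Pd))) / (b x)^2)) / (a x / b x)) x :=
      hdiv1.log (ne_of_gt (div_pos ha0 hb0))
    have hlog2 : HasDerivAt (fun ε => Real.log ((1 - a ε) / (1 - b ε)))
        (((-(-α * (1 - Pfa)) * (1 - b x) - (1 - a x) * (-(-α * (1 - Pd)))) / (1 - b x)^2)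
          / ((1 - a x) / (1 - b x))) x :=
      hdiv2.log (ne_of_gt (div_pos (by linarith) (by linarith)))
    have ht1 := hha.mul hlog1
    have ht2 := hha'.mul hlog2
    have htot := ht1.add ht2
    have hfun : (fun ε : ℝ =>
        klBern (piProb (β10' + α * (p - ε)) (β01' + α * p) Pfa)
               (piProb (β10' + α * (p - ε)) (β01' + α * p) Pd))
        = fun ε => a ε * Real.log (a ε / b ε)
            + (1 - a ε) * Real.log ((1 - a ε) / (1 - b ε)) := by
      funext ε
      simp only [klBern, piProb, ha_def, hb_def, hc_def]
    rw [hfun]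
    refine htot.congr_deriv ?_
    have hbne : b x ≠ 0 := ne_of_gt hb0
    have hbne1 : (1:ℝ) - b x ≠ 0 := by linarith
    have hane : a x ≠ 0 := ne_of_gt ha0
    have hane1 : (1:ℝ) - a x ≠ 0 := by linarith
    simp only [hD_def]
    generalize a x = u at *
    generalize b x = v at *
    generalize Real.log (u / v) = L1
    generalize Real.log ((1 - u) / (1 - v)) = L2
    field_simp
    ring
  apply strictMonoOn_of_deriv_pos (convex_Icc 0 p)
  · intro x hx
    exact (hasD x hx).continuousAt.continuousWithinAt
  · intro x hx
    rw [interior_Icc] at hx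
    have hx' : x ∈ Set.Icc (0:ℝ) p := ⟨le_of_lt hx.1, le_of_lt hx.2⟩
    rw [(hasD x hx').deriv]
    have ht0 : 0 ≤ β10' + α * (p - x) := by nlinarith [hx.1, hx.2]
    have htc : β10' + α * (p - x) + c < 1 := by nlinarith [hx.1, hx.2]
    have hkey := key_ineq Pfa Pd (β10' + α * (p - x)) c (a x) (b x)
      hPfa hPfaPd hPd ht0 hc0 htc (by simp only [ha_def]) (by simp only [hb_def])
    simp only [hD_def]
    nlinarith [mul_neg_of_pos_of_neg hα0 hkey]
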